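/- arXiv:1302.3926 — 2 statements merged into one kernel-verified Lean document; each statement's English description precedes it below -/
import Mathlib

section
/- Let X be a smooth projective surface with χ(O_X) = 2, K_X = E, Ĉ an irreducible curve with Ĉ² = 0, Ĉ·E = 2, E² = −1, and suppose h⁰(O_X(aĈ)) = 1 for all a ≥ 0 and all higher cohomology of aĈ+bE vanishes for 2a > b > 0. Then h⁰(O_X(aĈ + E)) = a + 2 for all a ≥ 1, and consequently the multiplication map H⁰(O_X(Ĉ)) ⊗ H⁰(O_X((a−1)Ĉ + E)) → H⁰(O_X(aĈ + E)) is not surjective for any a ≥ 2. -/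
open Module

/-- On a smooth projective surface with `χ(O_X) = 2`, `K_X = E`, `Ĉ² = 0`, `Ĉ·E = 2`,
`E² = −1`, with `h⁰(aĈ) = 1` for all `a ≥ 0` and vanishing higher cohomology of
`aĈ + bE` for `2a > b > 0` (sections are modelled by finite-dimensional vector spaces
`V D` with `h⁰(D) = dim V D`, together with Riemann–Roch):
`h⁰(aĈ + E) = a + 2` for all `a ≥ 1`, and the multiplication map
`H⁰(Ĉ) ⊗ H⁰((a−1)Ĉ + E) → H⁰(aĈ + E)` is not surjective for `a ≥ 2`. -/
theorem stmt12 (𝕜 : Type*) [Field 𝕜] (Div : Type*) [AddCommGroup Div]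
    (inter : Div →ₗ[ℤ] Div →ₗ[ℤ] ℤ)
    (hsymm : ∀ x y : Div, inter x y = inter y x)
    (K E Chat : Div)
    (V : Div → Type*) [∀ D, AddCommGroup (V D)] [∀ D, Module 𝕜 (V D)]
    [∀ D, FiniteDimensional 𝕜 (V D)]
    (h1 h2 : Div → ℕ)
    (hRR : ∀ D : Div,
      2 * ((finrank 𝕜 (V D) : ℤ) - (h1 D : ℤ) + (h2 D : ℤ)) = inter D (D - K) + 4)
    (hK : K = E)
    (hCC : inter Chat Chat = 0) (hCE : inter Chat E = 2) (hEE : inter E E = -1)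
    (hvanish : ∀ a b : ℤ, 2 * a > b → b > 0 →
      h1 (a • Chat + b • E) = 0 ∧ h2 (a • Chat + b • E) = 0)
    (h0C : ∀ a : ℕ, finrank 𝕜 (V (a • Chat)) = 1) :
    (∀ a : ℤ, 1 ≤ a → (finrank 𝕜 (V (a • Chat + E)) : ℤ) = a + 2) ∧
    (∀ a : ℤ, 2 ≤ a →
      ∀ μ : V Chat →ₗ[𝕜] V ((a - 1) • Chat + E) →ₗ[𝕜] V (a • Chat + E),
        ¬ Function.Surjective (TensorProduct.lift μ)) := by
  have key : ∀ a : ℤ, 1 ≤ a → (finrank 𝕜 (V (a • Chat + E)) : ℤ) = a + 2 := by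
    intro a ha
    have hv := hvanish a 1 (by linarith) one_pos
    rw [one_smul] at hv
    have hrr := hRR (a • Chat + E)
    have hint : inter (a • Chat + E) (a • Chat + E - K) = 2 * a := by
      rw [hK, add_sub_cancel_right]
      simp only [map_add, map_zsmul, LinearMap.add_apply, LinearMap.smul_apply,
        smul_eq_mul, hCC, hsymm E Chat, hCE]
      ring
    rw [hint, hv.1, hv.2] at hrr
    push_cast at hrr
    linarith
  refine ⟨key, fun a ha μ hsurj => ?_⟩
  have h1d : finrank 𝕜 (V Chat) = 1 := by
    have := h0C 1
    rwa [one_smul] at this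
  have h2d : (finrank 𝕜 (V ((a - 1) • Chat + E)) : ℤ) = a + 1 := by
    have := key (a - 1) (by linarith)
    linarith
  have h3d : (finrank 𝕜 (V (a • Chat + E)) : ℤ) = a + 2 := key a (by linarith)
  have hle : finrank 𝕜 (V (a • Chat + E)) ≤
      finrank 𝕜 (TensorProduct 𝕜 (V Chat) (V ((a - 1) • Chat + E))) := by
    calc finrank 𝕜 (V (a • Chat + E))
        = finrank 𝕜 (⊤ : Submodule 𝕜 (V (a • Chat + E))) := (finrank_top _ _).symm
      _ = finrank 𝕜 (LinearMap.range (TensorProduct.lift μ)) := by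
          rw [LinearMap.range_eq_top.mpr hsurj]
      _ ≤ _ := LinearMap.finrank_range_le _
  rw [finrank_tensorProduct, h1d, one_mul] at hle
  have : (finrank 𝕜 (V (a • Chat + E)) : ℤ) ≤
      (finrank 𝕜 (V ((a - 1) • Chat + E)) : ℤ) := by exact_mod_cast hle
  omega
end

section
/- The nef cone lattice monoid of the blow-up P₃ of ℙ² at 3 general points, namely {a₀H − ∑_{i=1}^3 aᵢEᵢ : aᵢ ∈ ℤ_{≥0}, a₀ ≥ aᵢ + a_j for all 1 ≤ i ≠ j ≤ 3}, equals the union of the two submonoids generated respectively by {H, H−E₁, H−E₂, H−E₃} and by {2H−E₁−E₂−E₃, H−E₁, H−E₂, H−E₃}, whose intersection is the submonoid generated by {H−E₁, H−E₂, H−E₃}. -/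
/-- Standard basis of `Pic(P₃) ≅ ℤ⁴` with coordinates in the basis `H, E₁, E₂, E₃`. -/
def basisVec (i : Fin 4) : Fin 4 → ℤ := fun j => if j = i then 1 else 0

/-- The nef lattice monoid of `P₃`, the blow-up of `ℙ²` at three general points:
classes `a₀H − a₁E₁ − a₂E₂ − a₃E₃` with all `aᵢ ≥ 0` and `a₀ ≥ aᵢ + aⱼ` for
`1 ≤ i ≠ j ≤ 3` (a class `x` has `x 0 = a₀`, `x i = −aᵢ` for `i ≥ 1`). -/
def nefP3 : Set (Fin 4 → ℤ) :=
  {x | 0 ≤ x 0 ∧ (∀ i : Fin 4, i ≠ 0 → x i ≤ 0) ∧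
    ∀ i j : Fin 4, i ≠ 0 → j ≠ 0 → i ≠ j → -(x i) + -(x j) ≤ x 0}

open AddSubmonoid in
lemma memM1 (x : Fin 4 → ℤ) :
    x ∈ AddSubmonoid.closure {basisVec 0, basisVec 0 - basisVec 1,
      basisVec 0 - basisVec 2, basisVec 0 - basisVec 3} ↔
    x 1 ≤ 0 ∧ x 2 ≤ 0 ∧ x 3 ≤ 0 ∧ 0 ≤ x 0 + x 1 + x 2 + x 3 := by
  constructor
  · intro hx
    induction hx using AddSubmonoid.closure_induction with
    | mem y hy => rcases hy with h|h|h|h <;> subst h <;> decide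
    | zero => decide
    | add a b _ _ ha hb => simp only [Pi.add_apply]; omega
  · rintro ⟨h1, h2, h3, h0⟩
    have key : x = (x 0 + x 1 + x 2 + x 3).toNat • basisVec 0
        + (-x 1).toNat • (basisVec 0 - basisVec 1)
        + (-x 2).toNat • (basisVec 0 - basisVec 2)
        + (-x 3).toNat • (basisVec 0 - basisVec 3) := by
      funext i
      fin_cases i
      · show x 0 = _
        simp (config := { decide := true }) [basisVec]; omega
      · show x 1 = _
        simp (config := { decide := true }) [basisVec]; omega
      · show x 2 = _
        simp (config := { decide := true }) [basisVec]; omega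
      · show x 3 = _
        simp (config := { decide := true }) [basisVec]; omega
    rw [key]
    exact add_mem (add_mem (add_mem
      (nsmul_mem (subset_closure (by simp)) _)
      (nsmul_mem (subset_closure (by simp)) _))
      (nsmul_mem (subset_closure (by simp)) _))
      (nsmul_mem (subset_closure (by simp)) _)

lemma memM2 (x : Fin 4 → ℤ) :
    x ∈ AddSubmonoid.closure {2 • basisVec 0 - basisVec 1 - basisVec 2 - basisVec 3,
      basisVec 0 - basisVec 1, basisVec 0 - basisVec 2, basisVec 0 - basisVec 3} ↔
    x 1 ≤ 0 ∧ x 2 ≤ 0 ∧ x 3 ≤ 0 ∧ x 0 + x 1 + x 2 + x 3 ≤ 0 ∧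
      0 ≤ x 0 + x 1 + x 2 ∧ 0 ≤ x 0 + x 1 + x 3 ∧ 0 ≤ x 0 + x 2 + x 3 := by
  constructor
  · intro hx
    induction hx using AddSubmonoid.closure_induction with
    | mem y hy => rcases hy with h|h|h|h <;> subst h <;> decide
    | zero => decide
    | add a b _ _ ha hb => simp only [Pi.add_apply]; omega
  · rintro ⟨h1, h2, h3, hs, p3, p2, p1⟩
    have key : x = (-(x 0 + x 1 + x 2 + x 3)).toNat •
          (2 • basisVec 0 - basisVec 1 - basisVec 2 - basisVec 3)
        + (x 0 + x 2 + x 3).toNat • (basisVec 0 - basisVec 1)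
        + (x 0 + x 1 + x 3).toNat • (basisVec 0 - basisVec 2)
        + (x 0 + x 1 + x 2).toNat • (basisVec 0 - basisVec 3) := by
      funext i
      fin_cases i
      · show x 0 = _
        simp (config := { decide := true }) [basisVec]; omega
      · show x 1 = _
        simp (config := { decide := true }) [basisVec]; omega
      · show x 2 = _
        simp (config := { decide := true }) [basisVec]; omega
      · show x 3 = _
        simp (config := { decide := true }) [basisVec]; omega
    rw [key]
    exact add_mem (add_mem (add_mem
      (nsmul_mem (AddSubmonoid.subset_closure (by simp)) _)
      (nsmul_mem (AddSubmonoid.subset_closure (by simp)) _))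
      (nsmul_mem (AddSubmonoid.subset_closure (by simp)) _))
      (nsmul_mem (AddSubmonoid.subset_closure (by simp)) _)

lemma memM3 (x : Fin 4 → ℤ) :
    x ∈ AddSubmonoid.closure {basisVec 0 - basisVec 1,
      basisVec 0 - basisVec 2, basisVec 0 - basisVec 3} ↔
    x 1 ≤ 0 ∧ x 2 ≤ 0 ∧ x 3 ≤ 0 ∧ x 0 + x 1 + x 2 + x 3 = 0 := by
  constructor
  · intro hx
    induction hx using AddSubmonoid.closure_induction with
    | mem y hy => rcases hy with h|h|h <;> subst h <;> decide
    | zero => decide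
    | add a b _ _ ha hb => simp only [Pi.add_apply]; omega
  · rintro ⟨h1, h2, h3, hs⟩
    have key : x = (-x 1).toNat • (basisVec 0 - basisVec 1)
        + (-x 2).toNat • (basisVec 0 - basisVec 2)
        + (-x 3).toNat • (basisVec 0 - basisVec 3) := by
      funext i
      fin_cases i
      · show x 0 = _
        simp (config := { decide := true }) [basisVec]; omega
      · show x 1 = _
        simp (config := { decide := true }) [basisVec]; omega
      · show x 2 = _
        simp (config := { decide := true }) [basisVec]; omega
      · show x 3 = _
        simp (config := { decide := true }) [basisVec]; omega
    rw [key]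
    exact add_mem (add_mem
      (nsmul_mem (AddSubmonoid.subset_closure (by simp)) _)
      (nsmul_mem (AddSubmonoid.subset_closure (by simp)) _))
      (nsmul_mem (AddSubmonoid.subset_closure (by simp)) _)

/-- The nef lattice monoid of `P₃` equals the union of the submonoids generated by
`{H, H−E₁, H−E₂, H−E₃}` and by `{2H−E₁−E₂−E₃, H−E₁, H−E₂, H−E₃}` respectively, and
the intersection of the two submonoids is the submonoid generated by
`{H−E₁, H−E₂, H−E₃}`. -/
theorem stmt17 :
    nefP3 =
      (AddSubmonoid.closure {basisVec 0, basisVec 0 - basisVec 1,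
          basisVec 0 - basisVec 2, basisVec 0 - basisVec 3} : Set (Fin 4 → ℤ)) ∪
      (AddSubmonoid.closure {2 • basisVec 0 - basisVec 1 - basisVec 2 - basisVec 3,
          basisVec 0 - basisVec 1, basisVec 0 - basisVec 2,
          basisVec 0 - basisVec 3} : Set (Fin 4 → ℤ)) ∧
    AddSubmonoid.closure {basisVec 0, basisVec 0 - basisVec 1,
          basisVec 0 - basisVec 2, basisVec 0 - basisVec 3} ⊓
      AddSubmonoid.closure {2 • basisVec 0 - basisVec 1 - basisVec 2 - basisVec 3,
          basisVec 0 - basisVec 1, basisVec 0 - basisVec 2, basisVec 0 - basisVec 3}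
      = AddSubmonoid.closure {basisVec 0 - basisVec 1, basisVec 0 - basisVec 2,
          basisVec 0 - basisVec 3} := by
  constructor
  · ext x
    simp only [Set.mem_union, SetLike.mem_coe, memM1, memM2, nefP3, Set.mem_setOf_eq]
    constructor
    · rintro ⟨h0, hi, hij⟩
      have h1 := hi 1 (by decide)
      have h2 := hi 2 (by decide)
      have h3 := hi 3 (by decide)
      have h12 := hij 1 2 (by decide) (by decide) (by decide)
      have h13 := hij 1 3 (by decide) (by decide) (by decide)
      have h23 := hij 2 3 (by decide) (by decide) (by decide)
      omega
    · rintro (⟨h1, h2, h3, h0⟩ | ⟨h1, h2, h3, hs, p3, p2, p1⟩) <;>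
      · refine ⟨by omega, ?_, ?_⟩
        · intro i hi
          fin_cases i
          · exact absurd rfl hi
          · show x 1 ≤ 0; omega
          · show x 2 ≤ 0; omega
          · show x 3 ≤ 0; omega
        · intro i j hi hj hij
          fin_cases i <;> fin_cases j <;>
            first
              | exact absurd rfl hi
              | exact absurd rfl hj
              | exact absurd rfl hij
              | (show -(x 1) + -(x 2) ≤ x 0; omega)
              | (show -(x 2) + -(x 1) ≤ x 0; omega)
              | (show -(x 1) + -(x 3) ≤ x 0; omega)
              | (show -(x 3) + -(x 1) ≤ x 0; omega)
              | (show -(x 2) + -(x 3) ≤ x 0; omega)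
              | (show -(x 3) + -(x 2) ≤ x 0; omega)
  · ext x
    simp only [AddSubmonoid.mem_inf, memM1, memM2, memM3]
    omega
end
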